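/- Let D ⊆ ℂⁿ be convex, let P ∈ ℂ^{n×n} be Hermitian positive definite, and let f : ℝ × D → ℂⁿ be continuously differentiable in the state. Suppose there is c > 0 such that for all t ∈ ℝ, x ∈ D, and δ ∈ ℂⁿ, Re(δᴴ P (Df(t,x)δ)) ≤ -c · Re(δᴴ P δ), where Df(t,x) is the ℝ-linear Jacobian of x ↦ f(t,x) (ℂⁿ identified with ℝ^{2n}). Then for any two differentiable curves x₁, x₂ : [t₀,∞) → D satisfying ẋᵢ(t) = f(t, xᵢ(t)), one has ‖x₁(t) - x₂(t)‖_P ≤ e^{-c(t - t₀)} ‖x₁(t₀) - x₂(t₀)‖_P for all t ≥ t₀. -/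

import Mathlib

open Matrix
open scoped ComplexOrder

lemma reForm_hasDerivAt {n : ℕ} (P : Matrix (Fin n) (Fin n) ℂ)
    {u w : ℝ → Fin n → ℂ} {u' w' : Fin n → ℂ} {s : ℝ}
    (hu : HasDerivAt u u' s) (hw : HasDerivAt w w' s) :
    HasDerivAt (fun s => (star (u s) ⬝ᵥ P.mulVec (w s)).re)
      ((star u' ⬝ᵥ P.mulVec (w s)).re + (star (u s) ⬝ᵥ P.mulVec w').re) s := by
  have hC : HasDerivAt (fun s => star (u s) ⬝ᵥ P.mulVec (w s))
      (star u' ⬝ᵥ P.mulVec (w s) + star (u s) ⬝ᵥ P.mulVec w') s := by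
    simp only [dotProduct, mulVec, Pi.star_apply, Finset.sum_add_distrib.symm]
    apply HasDerivAt.fun_sum
    intro i _
    have h1 : HasDerivAt (fun s => star (u s i)) (star (u' i)) s :=
      (hasDerivAt_pi.1 hu i).star
    have h2 : HasDerivAt (fun s => ∑ j, P i j * w s j) (∑ j, P i j * w' j) s := by
      apply HasDerivAt.fun_sum
      intro j _
      exact (hasDerivAt_pi.1 hw j).const_mul (P i j)
    exact h1.mul h2
  have := Complex.reCLM.hasFDerivAt.comp_hasDerivAt s hC
  simp only [Complex.reCLM_apply, Complex.add_re] at this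
  exact this

lemma reForm_symm {n : ℕ} {P : Matrix (Fin n) (Fin n) ℂ} (hP : P.IsHermitian)
    (a b : Fin n → ℂ) :
    (star a ⬝ᵥ P.mulVec b).re = (star b ⬝ᵥ P.mulVec a).re := by
  have h : star a ⬝ᵥ P.mulVec b = star (star b ⬝ᵥ P.mulVec a) := by
    rw [star_dotProduct]
    congr 1
    rw [star_mulVec, hP.eq, dotProduct_mulVec]
  rw [h]
  simp [Complex.star_def]

/-- The norm associated with the inner product `⟨y, x⟩_P = Re (yᴴ P x)`. -/
noncomputable def normP {n : ℕ} (P : Matrix (Fin n) (Fin n) ℂ) (v : Fin n → ℂ) : ℝ :=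
  Real.sqrt ((star v ⬝ᵥ P.mulVec v).re)

/-- if the real-linear Jacobian of the (continuously differentiable in state)
vector field `f` satisfies the infinitesimal contraction condition
`Re (δᴴ P (Df(t,x) δ)) ≤ -c Re (δᴴ P δ)` uniformly on a convex domain `D`, then any two
solutions contract exponentially in the `P`-weighted norm. -/
theorem contraction_of_infinitesimal_contraction {n : ℕ}
    (D : Set (Fin n → ℂ)) (hD : Convex ℝ D)
    (P : Matrix (Fin n) (Fin n) ℂ) (hP : P.PosDef)
    (f : ℝ → (Fin n → ℂ) → (Fin n → ℂ))
    (Df : ℝ → (Fin n → ℂ) → ((Fin n → ℂ) →L[ℝ] (Fin n → ℂ)))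
    (hf : ∀ t : ℝ, ∀ x ∈ D, HasFDerivAt (f t) (Df t x) x)
    (hf' : ∀ t : ℝ, ContinuousOn (Df t) D)
    (c : ℝ) (hc : 0 < c)
    (hcontr : ∀ t : ℝ, ∀ x ∈ D, ∀ δ : Fin n → ℂ,
      (star δ ⬝ᵥ P.mulVec (Df t x δ)).re ≤ -c * (star δ ⬝ᵥ P.mulVec δ).re)
    (t₀ : ℝ) (x₁ x₂ : ℝ → (Fin n → ℂ))
    (hx₁ : ∀ t, t₀ ≤ t → x₁ t ∈ D ∧ HasDerivAt x₁ (f t (x₁ t)) t)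
    (hx₂ : ∀ t, t₀ ≤ t → x₂ t ∈ D ∧ HasDerivAt x₂ (f t (x₂ t)) t) :
    ∀ t, t₀ ≤ t →
      normP P (x₁ t - x₂ t) ≤ Real.exp (-c * (t - t₀)) * normP P (x₁ t₀ - x₂ t₀) := by
  set δ : ℝ → Fin n → ℂ := fun s => x₁ s - x₂ s with hδ
  set V : ℝ → ℝ := fun s => (star (δ s) ⬝ᵥ P.mulVec (δ s)).re with hV
  have hVnn : ∀ s, 0 ≤ V s := fun s => hP.posSemidef.re_dotProduct_nonneg (δ s)
  have hδd : ∀ s, t₀ ≤ s → HasDerivAt δ (f s (x₁ s) - f s (x₂ s)) s :=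
    fun s hs => ((hx₁ s hs).2.sub (hx₂ s hs).2)
  -- Key inequality via mean value on the segment
  have key : ∀ s, t₀ ≤ s →
      (star (δ s) ⬝ᵥ P.mulVec (f s (x₁ s) - f s (x₂ s))).re ≤ -c * V s := by
    intro s hs
    obtain ⟨h₁, -⟩ := hx₁ s hs
    obtain ⟨h₂, -⟩ := hx₂ s hs
    set d : Fin n → ℂ := δ s with hd
    have hmem : ∀ σ ∈ Set.Icc (0:ℝ) 1, x₂ s + σ • d ∈ D := by
      intro σ hσ
      have := hD h₂ h₁ (by linarith [hσ.2] : (0:ℝ) ≤ 1 - σ) hσ.1 (by ring)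
      have heq : (1 - σ) • x₂ s + σ • x₁ s = x₂ s + σ • d := by
        simp only [hd, hδ, smul_sub, sub_smul, one_smul]
        abel
      rwa [heq] at this
    set g : ℝ → ℝ := fun σ =>
      (star d ⬝ᵥ P.mulVec (f s (x₂ s + σ • d))).re + c * V s * σ with hg
    have hgd : ∀ σ ∈ Set.Icc (0:ℝ) 1, HasDerivAt g
        ((star d ⬝ᵥ P.mulVec (Df s (x₂ s + σ • d) d)).re + c * V s) σ := by
      intro σ hσ
      have hcurve : HasDerivAt (fun σ : ℝ => x₂ s + σ • d) d σ := by
        simpa using ((hasDerivAt_id σ).smul_const d).const_add (x₂ s)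
      have hfc : HasDerivAt (fun σ : ℝ => f s (x₂ s + σ • d))
          (Df s (x₂ s + σ • d) d) σ :=
        (hf s _ (hmem σ hσ)).comp_hasDerivAt σ hcurve
      have h1 := reForm_hasDerivAt P (hasDerivAt_const σ d) hfc
      simp only [star_zero, zero_dotProduct, Complex.zero_re, zero_add] at h1
      have h2 := h1.add ((hasDerivAt_id σ).const_mul (c * V s))
      rw [mul_one] at h2
      exact h2
    have hanti : AntitoneOn g (Set.Icc 0 1) := by
      apply antitoneOn_of_deriv_nonpos (convex_Icc 0 1)
      · exact fun σ hσ => (hgd σ hσ).continuousAt.continuousWithinAt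
      · intro σ hσ
        rw [interior_Icc] at hσ
        exact (hgd σ (Set.mem_Icc_of_Ioo hσ)).differentiableAt.differentiableWithinAt
      · intro σ hσ
        rw [interior_Icc] at hσ
        rw [(hgd σ (Set.mem_Icc_of_Ioo hσ)).deriv]
        have := hcontr s _ (hmem σ (Set.mem_Icc_of_Ioo hσ)) d
        have hVs : V s = (star d ⬝ᵥ P.mulVec d).re := rfl
        nlinarith [this]
    have h10 := hanti (Set.left_mem_Icc.2 zero_le_one) (Set.right_mem_Icc.2 zero_le_one)
      zero_le_one
    have hg1 : g 1 = (star d ⬝ᵥ P.mulVec (f s (x₁ s))).re + c * V s := by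
      have h1d : x₂ s + d = x₁ s := by
        simp [hd, hδ]
      simp [hg, h1d]
    have hg0 : g 0 = (star d ⬝ᵥ P.mulVec (f s (x₂ s))).re := by
      simp [hg]
    rw [hg1, hg0] at h10
    have hsplit : (star d ⬝ᵥ P.mulVec (f s (x₁ s) - f s (x₂ s))).re =
        (star d ⬝ᵥ P.mulVec (f s (x₁ s))).re - (star d ⬝ᵥ P.mulVec (f s (x₂ s))).re := by
      rw [mulVec_sub, dotProduct_sub, Complex.sub_re]
    rw [hsplit]
    linarith
  -- V has the expected derivative
  have hVd : ∀ s, t₀ ≤ s → HasDerivAt V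
      (2 * (star (δ s) ⬝ᵥ P.mulVec (f s (x₁ s) - f s (x₂ s))).re) s := by
    intro s hs
    have := reForm_hasDerivAt P (hδd s hs) (hδd s hs)
    have hsym := reForm_symm hP.isHermitian (f s (x₁ s) - f s (x₂ s)) (δ s)
    rw [hsym] at this
    convert this using 1
    ring
  intro t ht
  -- exponential weighting
  set W : ℝ → ℝ := fun s => Real.exp (2 * c * s) * V s with hW
  have hWd : ∀ s, t₀ ≤ s → HasDerivAt W
      (2 * c * Real.exp (2 * c * s) * V s +
        Real.exp (2 * c * s) * (2 * (star (δ s) ⬝ᵥ P.mulVec (f s (x₁ s) - f s (x₂ s))).re)) s := by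
    intro s hs
    have he : HasDerivAt (fun s : ℝ => Real.exp (2 * c * s)) (2 * c * Real.exp (2 * c * s)) s := by
      simpa [mul_comm] using (((hasDerivAt_id s).const_mul (2 * c)).exp)
    exact he.mul (hVd s hs)
  have hWanti : AntitoneOn W (Set.Icc t₀ t) := by
    apply antitoneOn_of_deriv_nonpos (convex_Icc t₀ t)
    · exact fun s hs => (hWd s hs.1).continuousAt.continuousWithinAt
    · intro s hs
      rw [interior_Icc] at hs
      exact (hWd s hs.1.le).differentiableAt.differentiableWithinAt
    · intro s hs
      rw [interior_Icc] at hs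
      rw [(hWd s hs.1.le).deriv]
      have hk := key s hs.1.le
      have he := Real.exp_pos (2 * c * s)
      nlinarith
  have hWt : W t ≤ W t₀ :=
    hWanti (Set.left_mem_Icc.2 ht) (Set.right_mem_Icc.2 ht) ht
  have hVt : V t ≤ Real.exp (2 * c * (t₀ - t)) * V t₀ := by
    have hepos := Real.exp_pos (2 * c * t)
    rw [← mul_le_mul_iff_right₀ hepos]
    calc Real.exp (2 * c * t) * V t ≤ Real.exp (2 * c * t₀) * V t₀ := hWt
      _ = Real.exp (2 * c * t) * (Real.exp (2 * c * (t₀ - t)) * V t₀) := by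
          rw [← mul_assoc, ← Real.exp_add]; ring_nf
  -- conclude with square roots
  have hnp : normP P (x₁ t - x₂ t) = Real.sqrt (V t) := rfl
  have hnp0 : normP P (x₁ t₀ - x₂ t₀) = Real.sqrt (V t₀) := rfl
  rw [hnp, hnp0]
  calc Real.sqrt (V t) ≤ Real.sqrt (Real.exp (2 * c * (t₀ - t)) * V t₀) :=
        Real.sqrt_le_sqrt hVt
    _ = Real.exp (-c * (t - t₀)) * Real.sqrt (V t₀) := by
        rw [Real.sqrt_mul (Real.exp_pos _).le]
        congr 1
        rw [show 2 * c * (t₀ - t) = (-c * (t - t₀)) + (-c * (t - t₀)) by ring,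
          Real.exp_add, Real.sqrt_mul_self (Real.exp_pos _).le]
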